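/- Let ε ∈ (0,1], let k ≥ 1 be an integer, and let Q be the output of the Frequent Directions algorithm run on an n×d matrix A with parameter ℓ = ⌈k + k/ε⌉. Then ‖A − π_{Q_k}(A)‖_F² ≤ (1+ε) ‖A − A_k‖_F². -/

import Mathlib

open Matrix

/-- The squared Euclidean norm of a vector in `ℝ^m`. -/
noncomputable def sqNorm {m : ℕ} (v : Fin m → ℝ) : ℝ := ∑ i, v i ^ 2

/-- The squared Frobenius norm of a real matrix. -/
noncomputable def frobSq {m p : ℕ} (M : Matrix (Fin m) (Fin p) ℝ) : ℝ :=
  ∑ i, ∑ j, M i j ^ 2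

lemma fd_bessel_eq {ι : Type*} [DecidableEq ι] {d : ℕ} (S : Finset ι)
    (W : ι → Fin d → ℝ)
    (hW : ∀ a ∈ S, ∀ b ∈ S, ∑ t, W a t * W b t = if a = b then 1 else 0)
    (r : Fin d → ℝ) :
    ∑ t, (r t - ∑ a ∈ S, (∑ t', r t' * W a t') * W a t) ^ 2 =
      ∑ t, r t ^ 2 - ∑ a ∈ S, (∑ t', r t' * W a t') ^ 2 := by
  have h1 : ∀ t, (r t - ∑ a ∈ S, (∑ t', r t' * W a t') * W a t) ^ 2 =
      r t ^ 2 - 2 * (r t * ∑ a ∈ S, (∑ t', r t' * W a t') * W a t)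
      + (∑ a ∈ S, (∑ t', r t' * W a t') * W a t) ^ 2 := by intro t; ring
  simp only [h1, Finset.sum_add_distrib, Finset.sum_sub_distrib]
  have h2 : ∑ t, r t * ∑ a ∈ S, (∑ t', r t' * W a t') * W a t
      = ∑ a ∈ S, (∑ t', r t' * W a t') ^ 2 := by
    have : ∀ t, r t * ∑ a ∈ S, (∑ t', r t' * W a t') * W a t
        = ∑ a ∈ S, (∑ t', r t' * W a t') * (r t * W a t) := by
      intro t; rw [Finset.mul_sum]; apply Finset.sum_congr rfl; intro a _; ring
    simp only [this]
    rw [Finset.sum_comm]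
    apply Finset.sum_congr rfl; intro a _
    rw [← Finset.mul_sum]; ring
  have h3 : ∑ t, (∑ a ∈ S, (∑ t', r t' * W a t') * W a t) ^ 2
      = ∑ a ∈ S, (∑ t', r t' * W a t') ^ 2 := by
    have hsq : ∀ t, (∑ a ∈ S, (∑ t', r t' * W a t') * W a t) ^ 2
        = ∑ a ∈ S, ∑ b ∈ S, ((∑ t', r t' * W a t') * (∑ t', r t' * W b t')) * (W a t * W b t) := by
      intro t
      rw [sq, Finset.sum_mul_sum]
      apply Finset.sum_congr rfl; intro a _
      apply Finset.sum_congr rfl; intro b _; ring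
    simp only [hsq]
    rw [Finset.sum_comm]
    have : ∀ a ∈ S, (∑ t, ∑ b ∈ S, ((∑ t', r t' * W a t') * (∑ t', r t' * W b t')) * (W a t * W b t))
        = (∑ t', r t' * W a t') ^ 2 := by
      intro a ha
      rw [Finset.sum_comm]
      have : ∀ b ∈ S, (∑ t, ((∑ t', r t' * W a t') * (∑ t', r t' * W b t')) * (W a t * W b t))
          = ((∑ t', r t' * W a t') * (∑ t', r t' * W b t')) * (if a = b then (1:ℝ) else 0) := by
        intro b hb
        rw [← Finset.mul_sum, hW a ha b hb]
      rw [Finset.sum_congr rfl this]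
      simp only [mul_ite, mul_one, mul_zero, Finset.sum_ite_eq, ha, if_true]
      ring
    rw [Finset.sum_congr rfl this]
  rw [← Finset.mul_sum, h2, h3]; ring

lemma fd_bessel_le {ι : Type*} [DecidableEq ι] {d : ℕ} (S : Finset ι)
    (W : ι → Fin d → ℝ)
    (hW : ∀ a ∈ S, ∀ b ∈ S, ∑ t, W a t * W b t = if a = b then 1 else 0)
    (r : Fin d → ℝ) :
    ∑ a ∈ S, (∑ t', r t' * W a t') ^ 2 ≤ ∑ t, r t ^ 2 := by
  have h := fd_bessel_eq S W hW r
  have h0 : (0:ℝ) ≤ ∑ t, (r t - ∑ a ∈ S, (∑ t', r t' * W a t') * W a t) ^ 2 :=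
    Finset.sum_nonneg fun t _ => sq_nonneg _
  linarith [h ▸ h0]

lemma fd_telescope (n : ℕ) (F : Fin (n+1) → ℝ) :
    F (Fin.last n) = F 0 + ∑ i : Fin n, (F i.succ - F i.castSucc) := by
  induction n with
  | zero => simp
  | succ m ih =>
    rw [Fin.sum_univ_castSucc]
    have h := ih (fun i => F i.castSucc)
    simp only [Fin.succ_castSucc] at h ⊢
    have hlast : Fin.last (m+1) = (Fin.last m).succ := by
      rw [← Fin.succ_last]
    rw [hlast]
    have h0 : (Fin.castSucc (0 : Fin (m+1))) = (0 : Fin (m+2)) := rfl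
    rw [h0] at h
    linarith [h]

lemma fd_quad {m d : ℕ} (M : Matrix (Fin m) (Fin d) ℝ) (x : Fin d → ℝ) :
    sqNorm (M.mulVec x) = x ⬝ᵥ (Mᵀ * M).mulVec x := by
  rw [← Matrix.mulVec_mulVec, Matrix.dotProduct_mulVec, Matrix.vecMul_transpose]
  simp [sqNorm, dotProduct, sq]

lemma fd_expand {d : ℕ} (M : Matrix (Fin d) (Fin d) ℝ) (hsymm : Mᵀ = M)
    (y : Fin d → Fin d → ℝ)
    (hy : ∀ a b : Fin d, ∑ t, y a t * y b t = if a = b then 1 else 0)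
    (μ : Fin d → ℝ) (hM : ∀ a, M.mulVec (y a) = μ a • y a) (x : Fin d → ℝ) :
    x ⬝ᵥ M.mulVec x = ∑ a, μ a * (∑ t, y a t * x t) ^ 2 := by
  -- completeness of the orthonormal basis
  set W : Matrix (Fin d) (Fin d) ℝ := Matrix.of y with hW
  have hWWt : W * Wᵀ = 1 := by
    ext a b
    simp only [Matrix.mul_apply, Matrix.transpose_apply, Matrix.one_apply, hW, Matrix.of_apply]
    exact hy a b
  have hWtW : Wᵀ * W = 1 := mul_eq_one_comm.mp hWWt
  have hcomp : ∀ t t' : Fin d, ∑ a, y a t * y a t' = if t = t' then 1 else 0 := by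
    intro t t'
    have := congrFun (congrFun hWtW t) t'
    simpa [Matrix.mul_apply, Matrix.transpose_apply, Matrix.one_apply, hW] using this
  set c : Fin d → ℝ := fun a => ∑ t', y a t' * x t' with hc
  have hx : ∀ t, x t = ∑ a, c a * y a t := by
    intro t
    have : ∀ a : Fin d, c a * y a t = ∑ t', x t' * (y a t' * y a t) := by
      intro a; rw [hc]; rw [Finset.sum_mul]; apply Finset.sum_congr rfl; intro t' _; ring
    rw [Finset.sum_congr rfl (fun a _ => this a), Finset.sum_comm]
    have : ∀ t' : Fin d, ∑ a, x t' * (y a t' * y a t) = x t' * if t' = t then 1 else 0 := by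
      intro t'; rw [← Finset.mul_sum, hcomp]
    rw [Finset.sum_congr rfl (fun t' _ => this t')]
    simp [Finset.sum_ite_eq]
  have heig : ∀ a : Fin d, y a ⬝ᵥ M.mulVec x = μ a * c a := by
    intro a
    rw [Matrix.dotProduct_mulVec]
    have : M.vecMul (y a) = μ a • y a := by
      conv_lhs => rw [← hsymm]
      rw [Matrix.vecMul_transpose, hM a]
    rw [this, smul_dotProduct]
    simp only [smul_eq_mul, dotProduct, hc, Finset.mul_sum]
  calc x ⬝ᵥ M.mulVec x
      = ∑ t, (∑ a, c a * y a t) * (M.mulVec x) t := by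
        simp only [dotProduct]
        exact Finset.sum_congr rfl fun t _ => by rw [← hx t]
    _ = ∑ a, ∑ t, c a * y a t * (M.mulVec x) t := by
        simp only [Finset.sum_mul]; exact Finset.sum_comm
    _ = ∑ a, c a * (y a ⬝ᵥ M.mulVec x) := by
        apply Finset.sum_congr rfl; intro a _
        rw [dotProduct, Finset.mul_sum]
        apply Finset.sum_congr rfl; intro t _; ring
    _ = ∑ a, μ a * (∑ t, y a t * x t) ^ 2 := by
        apply Finset.sum_congr rfl; intro a _
        rw [heig a, hc]; ring

lemma fd_kyfan {d : ℕ} (u : Fin d → ℝ) (hu_mono : ∀ a b : Fin d, a ≤ b → u b ≤ u a)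
    (hu_nn : ∀ a, 0 ≤ u a) (t : Fin d → ℝ) (ht0 : ∀ a, 0 ≤ t a) (ht1 : ∀ a, t a ≤ 1)
    (k : ℕ)
    (htsum : ∑ a, t a =
      ((Finset.univ.filter (fun a : Fin d => (a : ℕ) < k)).card : ℝ)) :
    ∑ a, u a * t a ≤ ∑ a ∈ Finset.univ.filter (fun a : Fin d => (a : ℕ) < k), u a := by
  set S := Finset.univ.filter (fun a : Fin d => (a : ℕ) < k) with hS
  rcases le_or_gt d k with hdk | hkd
  · have hSu : S = Finset.univ := by
      ext a; simp [hS, lt_of_lt_of_le a.isLt hdk]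
    rw [hSu]
    apply Finset.sum_le_sum
    intro a _
    exact mul_le_of_le_one_right (hu_nn a) (ht1 a)
  · set κ : Fin d := ⟨k, hkd⟩ with hκ
    have hmemS : ∀ a ∈ S, u κ ≤ u a := by
      intro a ha
      apply hu_mono
      have : (a : ℕ) < k := by simpa [hS] using ha
      exact le_of_lt (by simpa [Fin.lt_def, hκ] using this)
    have hmemSc : ∀ a ∈ Sᶜ, u a ≤ u κ := by
      intro a ha
      apply hu_mono
      have : ¬ ((a : ℕ) < k) := by simpa [hS] using ha
      simpa [Fin.le_def, hκ] using Nat.le_of_not_lt this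
    have hsplit : ∑ a ∈ S, (u a * t a) + ∑ a ∈ Sᶜ, (u a * t a) = ∑ a, u a * t a :=
      Finset.sum_add_sum_compl S _
    have htsplit : ∑ a ∈ S, t a + ∑ a ∈ Sᶜ, t a = ∑ a, t a :=
      Finset.sum_add_sum_compl S _
    have b1 : ∑ a ∈ S, (u a * t a) ≤ ∑ a ∈ S, (u a + u κ * (t a - 1)) := by
      apply Finset.sum_le_sum
      intro a ha
      have h1 : u a * (t a - 1) ≤ u κ * (t a - 1) :=
        mul_le_mul_of_nonpos_right (hmemS a ha) (by linarith [ht1 a])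
      nlinarith [h1]
    have b2 : ∑ a ∈ Sᶜ, (u a * t a) ≤ ∑ a ∈ Sᶜ, u κ * t a := by
      apply Finset.sum_le_sum
      intro a ha
      exact mul_le_mul_of_nonneg_right (hmemSc a ha) (ht0 a)
    have e1 : ∑ a ∈ S, (u a + u κ * (t a - 1)) =
        ∑ a ∈ S, u a + u κ * (∑ a ∈ S, t a - (S.card : ℝ)) := by
      rw [Finset.sum_add_distrib, ← Finset.mul_sum]
      congr 1
      rw [Finset.sum_sub_distrib]
      simp [mul_sub]
    have e2 : ∑ a ∈ Sᶜ, u κ * t a = u κ * ∑ a ∈ Sᶜ, t a := (Finset.mul_sum _ _ _).symm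
    have hfinal : u κ * (∑ a ∈ S, t a - (S.card : ℝ)) + u κ * ∑ a ∈ Sᶜ, t a = 0 := by
      have : ∑ a ∈ S, t a - (S.card : ℝ) + ∑ a ∈ Sᶜ, t a = 0 := by
        linarith [htsplit, htsum]
      rw [← mul_add, this, mul_zero]
    linarith [b1, b2, hsplit, e1, e2, hfinal]

lemma fd_sum_update {ℓ' : ℕ} (f g : Fin ℓ' → ℝ) (r0 : Fin ℓ') (hg : g r0 = 0)
    (hfg : ∀ r, r ≠ r0 → f r = g r) : ∑ r, f r = (∑ r, g r) + f r0 := by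
  have h : ∑ r, (f r - g r) = f r0 - g r0 := by
    apply Finset.sum_eq_single r0
    · intro r _ hr; rw [hfg r hr]; ring
    · simp
  rw [Finset.sum_sub_distrib, hg] at h
  linarith

lemma fd_diagquad {d ℓ : ℕ} (Y : Matrix (Fin d) (Fin ℓ) ℝ) (g : Fin ℓ → ℝ) (x : Fin d → ℝ) :
    x ⬝ᵥ (Y * Matrix.diagonal g * Yᵀ).mulVec x = ∑ j, g j * (∑ t, x t * Y t j) ^ 2 := by
  calc x ⬝ᵥ (Y * Matrix.diagonal g * Yᵀ).mulVec x
      = ∑ t, ∑ t', ∑ j, g j * ((x t * Y t j) * (x t' * Y t' j)) := by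
        simp only [Matrix.mulVec, dotProduct, Matrix.mul_apply, Matrix.mul_diagonal,
          Matrix.transpose_apply, Finset.mul_sum, Finset.sum_mul]
        apply Finset.sum_congr rfl; intro t _
        apply Finset.sum_congr rfl; intro t' _
        apply Finset.sum_congr rfl; intro j _
        simp only [Matrix.diagonal_apply, mul_ite, ite_mul, mul_zero, zero_mul,
          Finset.sum_ite_eq', Finset.mem_univ, if_true]
        ring
    _ = ∑ j, ∑ t, ∑ t', g j * ((x t * Y t j) * (x t' * Y t' j)) := by
        rw [Finset.sum_congr rfl (fun t _ => Finset.sum_comm)]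
        exact Finset.sum_comm
    _ = ∑ j, g j * (∑ t, x t * Y t j) ^ 2 := by
        apply Finset.sum_congr rfl; intro j _
        rw [sq, Finset.sum_mul_sum, Finset.mul_sum]
        apply Finset.sum_congr rfl; intro t _
        rw [Finset.mul_sum]

lemma fd_frob_trace {m p : ℕ} (M : Matrix (Fin m) (Fin p) ℝ) :
    frobSq M = Matrix.trace (Mᵀ * M) := by
  simp only [frobSq, Matrix.trace, Matrix.diag, Matrix.mul_apply, Matrix.transpose_apply, sq]
  exact Finset.sum_comm

lemma fd_trace_conj {d ℓ : ℕ} (Y : Matrix (Fin d) (Fin ℓ) ℝ) (hY : Yᵀ * Y = 1)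
    (g : Fin ℓ → ℝ) :
    Matrix.trace (Y * Matrix.diagonal g * Yᵀ) = ∑ j, g j := by
  rw [Matrix.trace_mul_comm, ← Matrix.mul_assoc, hY, Matrix.one_mul, Matrix.trace_diagonal]

lemma fd_parseval {d : ℕ} (y : Fin d → Fin d → ℝ)
    (hy : ∀ a b : Fin d, ∑ t, y a t * y b t = if a = b then 1 else 0) (x : Fin d → ℝ) :
    ∑ a, (∑ t, y a t * x t) ^ 2 = ∑ t, x t ^ 2 := by
  have hWWt : (Matrix.of y) * (Matrix.of y)ᵀ = 1 := by
    ext a b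
    simp only [Matrix.mul_apply, Matrix.transpose_apply, Matrix.one_apply, Matrix.of_apply]
    exact hy a b
  have hWtW : (Matrix.of y)ᵀ * (Matrix.of y) = 1 := mul_eq_one_comm.mp hWWt
  have hcomp : ∀ t t' : Fin d, ∑ a, y a t * y a t' = if t = t' then 1 else 0 := by
    intro t t'
    have := congrFun (congrFun hWtW t) t'
    simpa [Matrix.mul_apply, Matrix.transpose_apply, Matrix.one_apply] using this
  calc ∑ a, (∑ t, y a t * x t) ^ 2
      = ∑ a, ∑ t, ∑ t', (x t * x t') * (y a t * y a t') := by
        apply Finset.sum_congr rfl; intro a _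
        rw [sq, Finset.sum_mul_sum]
        apply Finset.sum_congr rfl; intro t _
        apply Finset.sum_congr rfl; intro t' _; ring
    _ = ∑ t, ∑ t', ∑ a, (x t * x t') * (y a t * y a t') := by
        rw [Finset.sum_comm]
        exact Finset.sum_congr rfl (fun t _ => Finset.sum_comm)
    _ = ∑ t, x t ^ 2 := by
        apply Finset.sum_congr rfl; intro t _
        have : ∀ t' : Fin d, ∑ a, (x t * x t') * (y a t * y a t')
            = (x t * x t') * (if t = t' then 1 else 0) := by
          intro t'; rw [← Finset.mul_sum, hcomp]
        rw [Finset.sum_congr rfl (fun t' _ => this t')]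
        simp [Finset.sum_ite_eq, sq]

/-- Let `ε ∈ (0,1]`, let `k ≥ 1` be an integer, and let `Q` be the output of
the Frequent Directions algorithm run on an `n × d` matrix `A` with parameter
`ℓ = ⌈k + k/ε⌉`.  Then `‖A - π_{Q_k}(A)‖_F² ≤ (1 + ε) ‖A - A_k‖_F²`, where
`π_{Q_k}(A)` projects each row of `A` onto the span of the top `k` right
singular vectors `y_1, …, y_k` of `Q`, and
`‖A - A_k‖_F² = ‖A‖_F² - ∑_{i=1}^k ‖A v_i‖²` for right singular vectors
`v_1, …, v_d` of `A` ordered by decreasing singular values. -/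
theorem fd_projection_relative_error
    (n d ℓ : ℕ) (hℓ : 0 < ℓ)
    (A : Matrix (Fin n) (Fin d) ℝ)
    (Q : Fin (n + 1) → Matrix (Fin ℓ) (Fin d) ℝ)
    (C : Fin n → Matrix (Fin ℓ) (Fin d) ℝ)
    (Z : Fin n → Matrix (Fin ℓ) (Fin ℓ) ℝ)
    (Y : Fin n → Matrix (Fin d) (Fin ℓ) ℝ)
    (s : Fin n → Fin ℓ → ℝ) (δ : Fin n → ℝ)
    -- the algorithm starts with the zero matrix
    (hQ0 : Q 0 = 0)
    -- `C i` is `Q^{i-1}` with its last row replaced by the `i`-th row of `A`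
    (hC : ∀ i : Fin n,
      C i = (Q i.castSucc).updateRow ⟨ℓ - 1, Nat.sub_lt hℓ Nat.one_pos⟩ (A i))
    -- a singular value decomposition `C i = Z S Yᵀ` of `C i`
    (hZ : ∀ i, (Z i)ᵀ * Z i = 1)
    (hY : ∀ i, (Y i)ᵀ * Y i = 1)
    (hSVD : ∀ i, C i = Z i * Matrix.diagonal (s i) * (Y i)ᵀ)
    (hmono : ∀ i, ∀ j j' : Fin ℓ, j ≤ j' → s i j' ≤ s i j)
    (hnn : ∀ i j, 0 ≤ s i j)
    -- `δ i` is the square of the smallest singular value of `C i`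
    (hδ : ∀ i, δ i = s i ⟨ℓ - 1, Nat.sub_lt hℓ Nat.one_pos⟩ ^ 2)
    -- the shrinking step producing `Q^i = S' Yᵀ`
    (hQs : ∀ i : Fin n,
      Q i.succ = Matrix.diagonal (fun j => Real.sqrt (s i j ^ 2 - δ i)) * (Y i)ᵀ)
    -- `v` is an orthonormal family of right singular vectors of `A`,
    -- ordered by decreasing singular values `σA`
    (v : Fin d → Fin d → ℝ) (σA : Fin d → ℝ)
    (hv : ∀ a b : Fin d, ∑ t, v a t * v b t = if a = b then 1 else 0)
    (hσmono : ∀ a b : Fin d, a ≤ b → σA b ≤ σA a)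
    (hσnn : ∀ a, 0 ≤ σA a)
    (hAv : ∀ a, (Aᵀ * A).mulVec (v a) = σA a ^ 2 • v a)
    -- `y` is an orthonormal family of right singular vectors of the output
    -- matrix `Q = Qⁿ`, ordered by decreasing singular values `τ`
    (y : Fin d → Fin d → ℝ) (τ : Fin d → ℝ)
    (hy : ∀ a b : Fin d, ∑ t, y a t * y b t = if a = b then 1 else 0)
    (hτmono : ∀ a b : Fin d, a ≤ b → τ b ≤ τ a)
    (hτnn : ∀ a, 0 ≤ τ a)
    (hQy : ∀ a, ((Q (Fin.last n))ᵀ * Q (Fin.last n)).mulVec (y a) = τ a ^ 2 • y a)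
    (ε : ℝ) (hε0 : 0 < ε) (hε1 : ε ≤ 1) (k : ℕ) (hk : 1 ≤ k)
    (hℓdef : ℓ = ⌈(k : ℝ) + (k : ℝ) / ε⌉₊)
 :
    frobSq (A - (Matrix.of fun rr t =>
      ∑ i ∈ Finset.univ.filter (fun i : Fin d => (i : ℕ) < k),
        (∑ t', A rr t' * y i t') * y i t)) ≤
      (1 + ε) * (frobSq A - ∑ i ∈ Finset.univ.filter (fun i : Fin d => (i : ℕ) < k), sqNorm (A.mulVec (v i))) := by
  classical
  set lastIdx : Fin ℓ := ⟨ℓ - 1, Nat.sub_lt hℓ Nat.one_pos⟩ with hlastIdx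
  set S : Finset (Fin d) := Finset.univ.filter (fun i : Fin d => (i : ℕ) < k) with hSdef
  have hδnn : ∀ i, 0 ≤ δ i := fun i => (hδ i) ▸ sq_nonneg _
  set Δ : ℝ := ∑ i : Fin n, δ i with hΔdef
  have hΔnn : 0 ≤ Δ := Finset.sum_nonneg fun i _ => hδnn i
  have hjle : ∀ j : Fin ℓ, j ≤ lastIdx := by
    intro j
    rw [hlastIdx, Fin.le_def]
    exact Nat.le_pred_of_lt j.isLt
  have hs2 : ∀ i j, 0 ≤ s i j ^ 2 - δ i := by
    intro i j
    rw [hδ i]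
    have h1 := hmono i j lastIdx (hjle j)
    have h2 := hnn i lastIdx
    rw [hlastIdx] at h1 h2 ⊢
    nlinarith
  -- conjugation identities
  have hCtC : ∀ i, (C i)ᵀ * C i = Y i * Matrix.diagonal (fun j => s i j ^ 2) * (Y i)ᵀ := by
    intro i
    rw [hSVD i]
    rw [Matrix.transpose_mul, Matrix.transpose_mul, Matrix.transpose_transpose,
      Matrix.diagonal_transpose]
    simp only [Matrix.mul_assoc]
    rw [← Matrix.mul_assoc ((Z i)ᵀ) (Z i), hZ i, Matrix.one_mul,
      ← Matrix.mul_assoc (Matrix.diagonal (s i)) (Matrix.diagonal (s i)),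
      Matrix.diagonal_mul_diagonal]
    have : (fun j => s i j * s i j) = fun j => s i j ^ 2 := funext fun j => (sq _).symm
    rw [this]
  have hQtQ : ∀ i : Fin n, (Q i.succ)ᵀ * Q i.succ
      = Y i * Matrix.diagonal (fun j => s i j ^ 2 - δ i) * (Y i)ᵀ := by
    intro i
    rw [hQs i, Matrix.transpose_mul, Matrix.diagonal_transpose, Matrix.transpose_transpose]
    simp only [Matrix.mul_assoc]
    rw [← Matrix.mul_assoc (Matrix.diagonal _) (Matrix.diagonal _),
      Matrix.diagonal_mul_diagonal]
    have : (fun j => Real.sqrt (s i j ^ 2 - δ i) * Real.sqrt (s i j ^ 2 - δ i))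
        = fun j => s i j ^ 2 - δ i := funext fun j => Real.mul_self_sqrt (hs2 i j)
    rw [this]
  -- quadratic forms
  have hCq : ∀ (i : Fin n) (x : Fin d → ℝ), sqNorm ((C i).mulVec x)
      = ∑ j, s i j ^ 2 * (∑ t, x t * Y i t j) ^ 2 := by
    intro i x; rw [fd_quad, hCtC i, fd_diagquad]
  have hQq : ∀ (i : Fin n) (x : Fin d → ℝ), sqNorm ((Q i.succ).mulVec x)
      = ∑ j, (s i j ^ 2 - δ i) * (∑ t, x t * Y i t j) ^ 2 := by
    intro i x; rw [fd_quad, hQtQ i, fd_diagquad]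
  have hYB : ∀ (i : Fin n) (x : Fin d → ℝ), ∑ j, (∑ t, x t * Y i t j) ^ 2 ≤ sqNorm x := by
    intro i x
    have hW : ∀ a ∈ (Finset.univ : Finset (Fin ℓ)), ∀ b ∈ (Finset.univ : Finset (Fin ℓ)),
        ∑ t, Y i t a * Y i t b = if a = b then 1 else 0 := by
      intro a _ b _
      have := congrFun (congrFun (hY i) a) b
      simpa [Matrix.mul_apply, Matrix.transpose_apply, Matrix.one_apply] using this
    have := fd_bessel_le Finset.univ (fun j t => Y i t j) hW x
    simpa [sqNorm] using this
  -- the last row of each Q is zero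
  have hQlast : ∀ (j : Fin (n+1)) (t : Fin d), Q j lastIdx t = 0 := by
    intro j
    induction j using Fin.cases with
    | zero => intro t; rw [hQ0]; rfl
    | succ i =>
      intro t
      rw [hQs i]
      have : ((Matrix.diagonal fun j => Real.sqrt (s i j ^ 2 - δ i)) * (Y i)ᵀ) lastIdx t
          = Real.sqrt (s i lastIdx ^ 2 - δ i) * (Y i)ᵀ lastIdx t := by
        rw [Matrix.diagonal_mul]
      rw [this, hδ i]
      simp
  -- update-row identities
  have hCup : ∀ (i : Fin n) (x : Fin d → ℝ), sqNorm ((C i).mulVec x)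
      = sqNorm ((Q i.castSucc).mulVec x) + (∑ t, A i t * x t) ^ 2 := by
    intro i x
    have hrow : (C i) lastIdx = A i := by rw [hC i]; exact Matrix.updateRow_self
    have h := fd_sum_update (fun r => (((C i).mulVec x) r) ^ 2)
        (fun r => (((Q i.castSucc).mulVec x) r) ^ 2) lastIdx
        (by
          have : ((Q i.castSucc).mulVec x) lastIdx = 0 := by
            simp [Matrix.mulVec, dotProduct, hQlast i.castSucc]
          simp [this])
        (by
          intro r hr
          have : (C i) r = (Q i.castSucc) r := by rw [hC i]; exact Matrix.updateRow_ne hr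
          simp [Matrix.mulVec, dotProduct, this])
    have hlast : ((C i).mulVec x) lastIdx = ∑ t, A i t * x t := by
      simp [Matrix.mulVec, dotProduct, hrow]
    rw [sqNorm, sqNorm, h]
    simp only [hlast]
  have hFup : ∀ i : Fin n, frobSq (C i) = frobSq (Q i.castSucc) + sqNorm (A i) := by
    intro i
    have hrow : (C i) lastIdx = A i := by rw [hC i]; exact Matrix.updateRow_self
    have h := fd_sum_update (fun r => ∑ t, (C i r t) ^ 2)
        (fun r => ∑ t, (Q i.castSucc r t) ^ 2) lastIdx
        (by simp [hQlast i.castSucc])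
        (by
          intro r hr
          have : (C i) r = (Q i.castSucc) r := by rw [hC i]; exact Matrix.updateRow_ne hr
          simp [this])
    rw [frobSq, frobSq, h]
    simp only [hrow, sqNorm]
  -- Frobenius norms through the SVD
  have hfrobC : ∀ i, frobSq (C i) = ∑ j, s i j ^ 2 := by
    intro i; rw [fd_frob_trace, hCtC i, fd_trace_conj _ (hY i)]
  have hfrobQ : ∀ i : Fin n, frobSq (Q i.succ) = (∑ j, s i j ^ 2) - ℓ * δ i := by
    intro i
    rw [fd_frob_trace, hQtQ i, fd_trace_conj _ (hY i), Finset.sum_sub_distrib]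
    simp [Finset.sum_const, Finset.card_univ, nsmul_eq_mul]
  have hfrobA : frobSq A = ∑ i : Fin n, sqNorm (A i) := rfl
  have hfrobtel : frobSq (Q (Fin.last n)) = frobSq A - ℓ * Δ := by
    have tel := fd_telescope n (fun j => frobSq (Q j))
    have h0 : frobSq (Q 0) = 0 := by rw [hQ0]; simp [frobSq]
    have hstep : ∀ i : Fin n, frobSq (Q i.succ) - frobSq (Q i.castSucc)
        = sqNorm (A i) - ℓ * δ i := by
      intro i
      have h1 := hfrobC i
      have h2 := hfrobQ i
      have h3 := hFup i
      linarith
    simp only [h0, zero_add] at tel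
    rw [Finset.sum_congr rfl (fun i _ => hstep i), Finset.sum_sub_distrib,
      ← Finset.mul_sum, ← hΔdef, ← hfrobA] at tel
    linarith [tel]
  -- sandwich bounds for arbitrary x
  have hAx : ∀ x : Fin d → ℝ, sqNorm (A.mulVec x) = ∑ i : Fin n, (∑ t, A i t * x t) ^ 2 := by
    intro x; simp [sqNorm, Matrix.mulVec, dotProduct]
  have G1 : ∀ x, sqNorm ((Q (Fin.last n)).mulVec x) ≤ sqNorm (A.mulVec x) := by
    intro x
    have tel := fd_telescope n (fun j => sqNorm ((Q j).mulVec x))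
    have h0 : sqNorm ((Q 0).mulVec x) = 0 := by rw [hQ0]; simp [sqNorm]
    have hstep : ∀ i : Fin n, sqNorm ((Q i.succ).mulVec x)
        - sqNorm ((Q i.castSucc).mulVec x) ≤ (∑ t, A i t * x t) ^ 2 := by
      intro i
      have h1 := hCup i x
      have h2 : sqNorm ((Q i.succ).mulVec x) ≤ sqNorm ((C i).mulVec x) := by
        rw [hQq i x, hCq i x]
        apply Finset.sum_le_sum; intro j _
        nlinarith [hδnn i, sq_nonneg (∑ t, x t * Y i t j)]
      linarith
    simp only [h0, zero_add] at tel
    rw [tel, hAx x]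
    exact Finset.sum_le_sum (fun i _ => hstep i)
  have G2 : ∀ x, sqNorm (A.mulVec x)
      ≤ sqNorm ((Q (Fin.last n)).mulVec x) + Δ * sqNorm x := by
    intro x
    have tel := fd_telescope n (fun j => sqNorm ((Q j).mulVec x))
    have h0 : sqNorm ((Q 0).mulVec x) = 0 := by rw [hQ0]; simp [sqNorm]
    have hstep : ∀ i : Fin n, (∑ t, A i t * x t) ^ 2 - δ i * sqNorm x
        ≤ sqNorm ((Q i.succ).mulVec x) - sqNorm ((Q i.castSucc).mulVec x) := by
      intro i
      have h1 := hCup i x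
      have h3 : sqNorm ((C i).mulVec x) - sqNorm ((Q i.succ).mulVec x)
          = δ i * ∑ j, (∑ t, x t * Y i t j) ^ 2 := by
        rw [hQq i x, hCq i x, ← Finset.sum_sub_distrib, Finset.mul_sum]
        apply Finset.sum_congr rfl; intro j _; ring
      have h4 : δ i * ∑ j, (∑ t, x t * Y i t j) ^ 2 ≤ δ i * sqNorm x :=
        mul_le_mul_of_nonneg_left (hYB i x) (hδnn i)
      linarith
    simp only [h0, zero_add] at tel
    have hsum := Finset.sum_le_sum (s := (Finset.univ : Finset (Fin n))) (fun i _ => hstep i)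
    rw [Finset.sum_sub_distrib, ← Finset.sum_mul, ← hΔdef, ← hAx x] at hsum
    linarith [tel ▸ hsum, hsum, tel]
  -- unit vectors
  have hyunit : ∀ a, sqNorm (y a) = 1 := by
    intro a
    have h := hy a a
    simp only [if_pos rfl] at h
    simp only [sqNorm, sq]
    exact h
  have hvunit : ∀ a, sqNorm (v a) = 1 := by
    intro a
    have h := hv a a
    simp only [if_pos rfl] at h
    simp only [sqNorm, sq]
    exact h
  -- singular values of Q
  have hQy2 : ∀ a, sqNorm ((Q (Fin.last n)).mulVec (y a)) = τ a ^ 2 := by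
    intro a
    rw [fd_quad, hQy a]
    have h := hy a a
    simp only [if_pos rfl] at h
    simp only [dotProduct, Pi.smul_apply, smul_eq_mul]
    have h2 : ∀ i : Fin d, y a i * (τ a ^ 2 * y a i) = τ a ^ 2 * (y a i * y a i) :=
      fun i => by ring
    rw [Finset.sum_congr rfl (fun i _ => h2 i), ← Finset.mul_sum, h]
    simp
  -- the left-hand side as a Pythagorean difference
  have horthS : ∀ a ∈ S, ∀ b ∈ S, ∑ t, y a t * y b t = if a = b then 1 else 0 :=
    fun a _ b _ => hy a b
  have hvS : ∀ a ∈ S, ∀ b ∈ S, ∑ t, v a t * v b t = if a = b then 1 else 0 :=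
    fun a _ b _ => hv a b
  have hLHS : frobSq (A - (Matrix.of fun rr t => ∑ i ∈ S, (∑ t', A rr t' * y i t') * y i t))
      = frobSq A - ∑ i ∈ S, sqNorm (A.mulVec (y i)) := by
    have hrow : ∀ rr : Fin n,
        ∑ t, (A rr t - ∑ i ∈ S, (∑ t', A rr t' * y i t') * y i t) ^ 2
        = ∑ t, (A rr t) ^ 2 - ∑ i ∈ S, (∑ t', A rr t' * y i t') ^ 2 :=
      fun rr => fd_bessel_eq S y horthS (A rr)
    calc frobSq (A - (Matrix.of fun rr t => ∑ i ∈ S, (∑ t', A rr t' * y i t') * y i t))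
        = ∑ rr, (∑ t, (A rr t) ^ 2 - ∑ i ∈ S, (∑ t', A rr t' * y i t') ^ 2) := by
          rw [frobSq]
          apply Finset.sum_congr rfl; intro rr _
          rw [← hrow rr]
          apply Finset.sum_congr rfl; intro t _
          simp [Matrix.sub_apply]
      _ = frobSq A - ∑ i ∈ S, sqNorm (A.mulVec (y i)) := by
          rw [Finset.sum_sub_distrib]
          congr 1
          rw [Finset.sum_comm]
          apply Finset.sum_congr rfl; intro i _
          simp [sqNorm, Matrix.mulVec, dotProduct]
  -- Ky Fan step
  have hsym : ((Q (Fin.last n))ᵀ * Q (Fin.last n))ᵀ = (Q (Fin.last n))ᵀ * Q (Fin.last n) := by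
    rw [Matrix.transpose_mul, Matrix.transpose_transpose]
  have hexp := fd_expand _ hsym y hy (fun a => τ a ^ 2) hQy
  have hQv : ∀ i : Fin d, sqNorm ((Q (Fin.last n)).mulVec (v i))
      = ∑ a, τ a ^ 2 * (∑ t, y a t * v i t) ^ 2 := by
    intro i; rw [fd_quad]; exact hexp (v i)
  set tt : Fin d → ℝ := fun a => ∑ i ∈ S, (∑ t, y a t * v i t) ^ 2 with htt
  have htt0 : ∀ a, 0 ≤ tt a := fun a => Finset.sum_nonneg fun i _ => sq_nonneg _
  have htt1 : ∀ a, tt a ≤ 1 := by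
    intro a
    have h := fd_bessel_le S v hvS (y a)
    have h2 : ∑ t, y a t ^ 2 = 1 := by
      have := hyunit a; simpa [sqNorm] using this
    calc tt a = ∑ i ∈ S, (∑ t, y a t * v i t) ^ 2 := rfl
      _ ≤ ∑ t, y a t ^ 2 := h
      _ = 1 := h2
  have httsum : ∑ a, tt a = (S.card : ℝ) := by
    calc ∑ a, tt a = ∑ i ∈ S, ∑ a, (∑ t, y a t * v i t) ^ 2 := Finset.sum_comm
      _ = ∑ i ∈ S, (1 : ℝ) := by
          apply Finset.sum_congr rfl; intro i _
          rw [fd_parseval y hy (v i)]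
          have := hvunit i; simpa [sqNorm] using this
      _ = (S.card : ℝ) := by simp
  have hKF : ∑ i ∈ S, sqNorm ((Q (Fin.last n)).mulVec (v i)) ≤ ∑ i ∈ S, τ i ^ 2 := by
    have hmain : ∑ i ∈ S, sqNorm ((Q (Fin.last n)).mulVec (v i)) = ∑ a, τ a ^ 2 * tt a := by
      rw [Finset.sum_congr rfl (fun i _ => hQv i), Finset.sum_comm]
      apply Finset.sum_congr rfl; intro a _
      rw [Finset.mul_sum]
    rw [hmain]
    exact fd_kyfan (fun a => τ a ^ 2)
      (fun a b hab => by nlinarith [hτmono a b hab, hτnn b])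
      (fun a => sq_nonneg _) tt htt0 htt1 k httsum
  -- Bessel bounds on Frobenius norms
  have hPA : ∑ i ∈ S, sqNorm (A.mulVec (v i)) ≤ frobSq A := by
    calc ∑ i ∈ S, sqNorm (A.mulVec (v i))
        = ∑ rr, ∑ i ∈ S, (∑ t, A rr t * v i t) ^ 2 := by
          rw [Finset.sum_comm]
          apply Finset.sum_congr rfl; intro i _
          simp [sqNorm, Matrix.mulVec, dotProduct]
      _ ≤ ∑ rr, ∑ t, A rr t ^ 2 :=
          Finset.sum_le_sum fun rr _ => fd_bessel_le S v hvS (A rr)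
      _ = frobSq A := rfl
  have hPQ : ∑ i ∈ S, sqNorm ((Q (Fin.last n)).mulVec (v i)) ≤ frobSq (Q (Fin.last n)) := by
    calc ∑ i ∈ S, sqNorm ((Q (Fin.last n)).mulVec (v i))
        = ∑ rr, ∑ i ∈ S, (∑ t, Q (Fin.last n) rr t * v i t) ^ 2 := by
          rw [Finset.sum_comm]
          apply Finset.sum_congr rfl; intro i _
          simp [sqNorm, Matrix.mulVec, dotProduct]
      _ ≤ ∑ rr, ∑ t, Q (Fin.last n) rr t ^ 2 :=
          Finset.sum_le_sum fun rr _ => fd_bessel_le S v hvS (Q (Fin.last n) rr)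
      _ = frobSq (Q (Fin.last n)) := rfl
  -- cardinality bound
  have hcard : S.card ≤ k := by
    have h1 : S.card ≤ (Finset.range k).card := by
      refine Finset.card_le_card_of_injOn (f := fun a => (a : ℕ)) ?_ ?_
      · intro a ha
        rw [hSdef] at ha
        simp only [Finset.coe_filter, Finset.mem_filter, Finset.mem_univ, true_and, Set.mem_setOf_eq] at ha
        exact Finset.mem_range.mpr ha
      · intro a _ b _ hab
        exact Fin.val_injective hab
    simpa using h1
  have hcardR : (S.card : ℝ) ≤ (k : ℝ) := by exact_mod_cast hcard
  -- per-vector lower bound via G2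
  have hJs : (∑ i ∈ S, sqNorm (A.mulVec (v i))) - (S.card : ℝ) * Δ
      ≤ ∑ i ∈ S, sqNorm ((Q (Fin.last n)).mulVec (v i)) := by
    have h : ∀ i ∈ S, sqNorm (A.mulVec (v i)) - Δ
        ≤ sqNorm ((Q (Fin.last n)).mulVec (v i)) := by
      intro i _
      have := G2 (v i)
      rw [hvunit i, mul_one] at this
      linarith
    have hsum := Finset.sum_le_sum h
    rw [Finset.sum_sub_distrib, Finset.sum_const, nsmul_eq_mul] at hsum
    linarith
  -- chain via G1
  have hy_chain : ∑ i ∈ S, τ i ^ 2 ≤ ∑ i ∈ S, sqNorm (A.mulVec (y i)) := by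
    apply Finset.sum_le_sum
    intro i _
    rw [← hQy2 i]
    exact G1 (y i)
  -- final arithmetic
  set P : ℝ := ∑ i ∈ S, sqNorm (A.mulVec (v i)) with hPdef
  have hR0 : 0 ≤ frobSq A - P := by linarith [hPA]
  have hellR : ((k : ℝ) + (k : ℝ) / ε) ≤ (ℓ : ℝ) := by
    rw [hℓdef]
    exact_mod_cast Nat.le_ceil _
  have hineq1 : ((ℓ : ℝ) - (S.card : ℝ)) * Δ ≤ frobSq A - P := by
    rw [sub_mul]
    linarith [hJs, hPQ, hfrobtel]
  have hineq2 : ((k : ℝ) / ε) * Δ ≤ frobSq A - P := by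
    have hle : (k : ℝ) / ε ≤ (ℓ : ℝ) - (S.card : ℝ) := by linarith
    have h2 := mul_le_mul_of_nonneg_right hle hΔnn
    rw [sub_mul] at hineq1
    rw [sub_mul] at h2
    linarith
  have hineq3 : (k : ℝ) * Δ ≤ ε * (frobSq A - P) := by
    have := mul_le_mul_of_nonneg_left hineq2 hε0.le
    have hek : ε * ((k : ℝ) / ε * Δ) = (k : ℝ) * Δ := by
      field_simp
    linarith [hek ▸ this]
  have hcd : (S.card : ℝ) * Δ ≤ ε * (frobSq A - P) := by
    have : (S.card : ℝ) * Δ ≤ (k : ℝ) * Δ := mul_le_mul_of_nonneg_right hcardR hΔnn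
    linarith
  rw [hLHS]
  have hfinal : frobSq A - ∑ i ∈ S, sqNorm (A.mulVec (y i))
      ≤ (frobSq A - P) + (S.card : ℝ) * Δ := by
    linarith [hy_chain, hKF, hJs]
  calc frobSq A - ∑ i ∈ S, sqNorm (A.mulVec (y i))
      ≤ (frobSq A - P) + (S.card : ℝ) * Δ := hfinal
    _ ≤ (frobSq A - P) + ε * (frobSq A - P) := by linarith
    _ = (1 + ε) * (frobSq A - P) := by ring
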